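/- Let ν ≠ 0 or τ ≠ 1 (so R ≠ id), τ > 1, and R(t) = sinh(τ·arsinh(t) − ν). Then h(t) = τ√(1+t²)·sinh(τ·arsinh(t)−ν) − t·cosh(τ·arsinh(t)−ν) is strictly increasing with lim_{t→−∞} h(t) = −∞ and lim_{t→+∞} h(t) = +∞, so h has a unique root t* and R''(t) < 0 for t < t*, R''(t) > 0 for t > t*. Hence R is concave on (−∞, t*] and convex on [t*, ∞). -/

import Mathlib

/-- The sinh-arsinh transformation `R t = sinh(τ·arsinh t − ν)`. -/
noncomputable def Rfun (ν τ : ℝ) (t : ℝ) : ℝ := Real.sinh (τ * Real.arsinh t - ν)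

/-- `h t = τ√(1+t²)·sinh(τ·arsinh t − ν) − t·cosh(τ·arsinh t − ν)`, so that
`R''(t) = τ(1+t²)^{-3/2} h(t)`. -/
noncomputable def hfun (ν τ : ℝ) (s : ℝ) : ℝ :=
  τ * Real.sqrt (1 + s^2) * Real.sinh (τ * Real.arsinh s - ν)
    - s * Real.cosh (τ * Real.arsinh s - ν)

/-- `R'(t) = τ·cosh(τ·arsinh t − ν)/√(1+t²)`. -/
noncomputable def Rp (ν τ : ℝ) (t : ℝ) : ℝ :=
  Real.cosh (τ * Real.arsinh t - ν) * (τ * (Real.sqrt (1 + t^2))⁻¹)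

private lemma sq1pos (t : ℝ) : (0:ℝ) < 1 + t^2 := by positivity

private lemma sqrtpos (t : ℝ) : 0 < Real.sqrt (1 + t^2) := Real.sqrt_pos.2 (sq1pos t)

private lemma hasDerivAt_s (t : ℝ) :
    HasDerivAt (fun x : ℝ => Real.sqrt (1 + x^2)) (t / Real.sqrt (1 + t^2)) t := by
  have h1 : HasDerivAt (fun x : ℝ => 1 + x^2) (2 * t) t := by
    simpa using (hasDerivAt_pow 2 t).const_add 1
  have := h1.sqrt (ne_of_gt (sq1pos t))
  convert this using 1
  rw [mul_comm 2 (Real.sqrt _)]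
  rw [mul_div_assoc, div_mul_eq_div_div]
  ring

private lemma hasDerivAt_u (ν τ t : ℝ) :
    HasDerivAt (fun x : ℝ => τ * Real.arsinh x - ν) (τ * (Real.sqrt (1 + t^2))⁻¹) t :=
  ((Real.hasDerivAt_arsinh t).const_mul τ).sub_const ν

private lemma hasDerivAt_R (ν τ t : ℝ) :
    HasDerivAt (Rfun ν τ) (Rp ν τ t) t := by
  exact (hasDerivAt_u ν τ t).sinh

private lemma hasDerivAt_Rp (ν τ t : ℝ) :
    HasDerivAt (Rp ν τ) (τ / (Real.sqrt (1 + t^2))^3 * hfun ν τ t) t := by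
  have hs := sqrtpos t
  have hinv : HasDerivAt (fun x : ℝ => τ * (Real.sqrt (1 + x^2))⁻¹)
      (τ * (-(t / Real.sqrt (1 + t^2)) / (Real.sqrt (1 + t^2))^2)) t :=
    ((hasDerivAt_s t).inv (ne_of_gt hs)).const_mul τ
  have hc : HasDerivAt (fun x : ℝ => Real.cosh (τ * Real.arsinh x - ν))
      (Real.sinh (τ * Real.arsinh t - ν) * (τ * (Real.sqrt (1 + t^2))⁻¹)) t :=
    (hasDerivAt_u ν τ t).cosh
  have := hc.mul hinv
  convert this using 1
  · rfl
  · rfl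
  · rfl
  have hne := ne_of_gt hs
  have hsq : Real.sqrt (1 + t^2) ^ 2 = 1 + t^2 := Real.sq_sqrt (sq1pos t).le
  have h3 : Real.sqrt (1 + t^2) ^ 3 = (1 + t^2) * Real.sqrt (1 + t^2) := by
    rw [show Real.sqrt (1 + t^2) ^ 3 = Real.sqrt (1 + t^2) ^ 2 * Real.sqrt (1 + t^2) by ring, hsq]
  have h4 : Real.sqrt (1 + t^2) ^ 4 = (1 + t^2) ^ 2 := by
    rw [show Real.sqrt (1 + t^2) ^ 4 = (Real.sqrt (1 + t^2) ^ 2) ^ 2 by ring, hsq]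
  have hss : Real.sqrt (1 + t^2) * (Real.sqrt (1 + t^2))⁻¹ = 1 := mul_inv_cancel₀ hne
  rw [hfun]
  linear_combination (τ^2 * Real.sinh (τ * Real.arsinh t - ν) * ((Real.sqrt (1 + t^2))⁻¹)^2) * hss

private lemma deriv2_R (ν τ t : ℝ) :
    deriv (deriv (Rfun ν τ)) t = τ / (Real.sqrt (1 + t^2))^3 * hfun ν τ t := by
  have hd : deriv (Rfun ν τ) = Rp ν τ := funext fun x => (hasDerivAt_R ν τ x).deriv
  rw [hd, (hasDerivAt_Rp ν τ t).deriv]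

private lemma hasDerivAt_h (ν τ t : ℝ) :
    HasDerivAt (hfun ν τ) ((τ^2 - 1) * Real.cosh (τ * Real.arsinh t - ν)) t := by
  have hs := sqrtpos t
  have h1 : HasDerivAt (fun x : ℝ => τ * Real.sqrt (1 + x^2) *
      Real.sinh (τ * Real.arsinh x - ν))
      ((τ * (t / Real.sqrt (1 + t^2))) * Real.sinh (τ * Real.arsinh t - ν)
        + (τ * Real.sqrt (1 + t^2)) *
          (Real.cosh (τ * Real.arsinh t - ν) * (τ * (Real.sqrt (1 + t^2))⁻¹))) t :=
    ((hasDerivAt_s t).const_mul τ).mul (hasDerivAt_u ν τ t).sinh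
  have h2 : HasDerivAt (fun x : ℝ => x * Real.cosh (τ * Real.arsinh x - ν))
      (1 * Real.cosh (τ * Real.arsinh t - ν)
        + t * (Real.sinh (τ * Real.arsinh t - ν) * (τ * (Real.sqrt (1 + t^2))⁻¹))) t :=
    (hasDerivAt_id t).mul (hasDerivAt_u ν τ t).cosh
  have := h1.sub h2
  convert this using 1
  · rfl
  · rfl
  · rfl
  have hne := ne_of_gt hs
  have hss : Real.sqrt (1 + t^2) * (Real.sqrt (1 + t^2))⁻¹ = 1 := mul_inv_cancel₀ hne
  linear_combination (-(τ^2 * Real.cosh (τ * Real.arsinh t - ν))) * hss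

private lemma hfun_neg (ν τ t : ℝ) : hfun ν τ (-t) = - hfun (-ν) τ t := by
  have h1 : τ * Real.arsinh (-t) - ν = -(τ * Real.arsinh t - (-ν)) := by
    rw [Real.arsinh_neg]; ring
  simp only [hfun, h1, Real.sinh_neg, Real.cosh_neg, neg_sq]
  ring

private lemma hfun_tendsto_atTop (ν τ : ℝ) (hτ : 1 < τ) :
    Filter.Tendsto (hfun ν τ) Filter.atTop Filter.atTop := by
  have hτ0 : (0:ℝ) < τ := by linarith
  set M : ℝ := Real.arsinh (2 / (τ - 1)) with hM
  have hMpos : 0 < M := Real.arsinh_pos_iff.2 (div_pos (by norm_num) (by linarith))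
  set t₀ : ℝ := max (Real.sinh ((M + ν) / τ)) 1 with ht₀
  refine Filter.tendsto_atTop_mono' _ ?_ Filter.tendsto_id
  filter_upwards [Filter.eventually_ge_atTop t₀] with t ht
  have ht1 : (1:ℝ) ≤ t := le_trans (le_max_right _ _) ht
  have ht0 : (0:ℝ) < t := by linarith
  set u : ℝ := τ * Real.arsinh t - ν with hu
  have huM : M ≤ u := by
    have h1 : Real.sinh ((M + ν) / τ) ≤ t := le_trans (le_max_left _ _) ht
    have h2 : (M + ν) / τ ≤ Real.arsinh t := by
      rw [← Real.arsinh_sinh ((M + ν) / τ)]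
      exact Real.arsinh_le_arsinh.2 h1
    have h3 : M + ν ≤ τ * Real.arsinh t := by
      rw [div_le_iff₀ hτ0] at h2; linarith [h2]
    simpa [hu] using by linarith
  have hsinhu : 2 / (τ - 1) ≤ Real.sinh u := by
    rw [← Real.sinh_arsinh (2 / (τ - 1)), ← hM]
    exact Real.sinh_le_sinh.2 huM
  have hsinhu0 : 0 ≤ Real.sinh u :=
    le_trans (div_nonneg (by norm_num) (by linarith)) hsinhu
  have hst : t ≤ Real.sqrt (1 + t^2) := by
    have h := Real.sqrt_le_sqrt (show t^2 ≤ 1 + t^2 by linarith)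
    rwa [Real.sqrt_sq ht0.le] at h
  have hexp : Real.exp (-u) ≤ 1 := by
    rw [Real.exp_le_one_iff]; linarith
  have hkey : hfun ν τ t =
      (τ * Real.sqrt (1 + t^2) - t) * Real.sinh u - t * Real.exp (-u) := by
    have : Real.cosh u = Real.sinh u + Real.exp (-u) := by
      rw [Real.cosh_eq, Real.sinh_eq]; ring
    rw [hfun, ← hu, this]; ring
  have hb1 : (τ - 1) * t * (2 / (τ - 1)) ≤ (τ * Real.sqrt (1 + t^2) - t) * Real.sinh u := by
    apply mul_le_mul _ hsinhu (div_nonneg (by norm_num) (by linarith))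
    · nlinarith [hst]
    · nlinarith [hst]
  have hb1' : (τ - 1) * t * (2 / (τ - 1)) = 2 * t := by
    have hne : τ - 1 ≠ 0 := by linarith
    field_simp
  have hb2 : t * Real.exp (-u) ≤ t := by
    nlinarith [Real.exp_pos (-u)]
  simp only [id]
  rw [hkey]
  nlinarith [hb1, hb1', hb2]

theorem stmt19 (ν τ : ℝ) (hne : ¬(ν = 0 ∧ τ = 1)) (hτ : 1 < τ) :
    StrictMono (hfun ν τ) ∧
    Filter.Tendsto (hfun ν τ) Filter.atBot Filter.atBot ∧
    Filter.Tendsto (hfun ν τ) Filter.atTop Filter.atTop ∧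
    ∃ tstar : ℝ, hfun ν τ tstar = 0 ∧
      (∀ t : ℝ, hfun ν τ t = 0 → t = tstar) ∧
      (∀ t : ℝ, t < tstar → deriv (deriv (Rfun ν τ)) t < 0) ∧
      (∀ t : ℝ, tstar < t → 0 < deriv (deriv (Rfun ν τ)) t) ∧
      ConcaveOn ℝ (Set.Iic tstar) (Rfun ν τ) ∧
      ConvexOn ℝ (Set.Ici tstar) (Rfun ν τ) := by
  have hmono : StrictMono (hfun ν τ) := by
    apply strictMono_of_deriv_pos
    intro t
    rw [(hasDerivAt_h ν τ t).deriv]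
    have h1 := Real.cosh_pos (x := τ * Real.arsinh t - ν)
    have h2 : 0 < τ^2 - 1 := by nlinarith
    exact mul_pos h2 h1
  have htop : Filter.Tendsto (hfun ν τ) Filter.atTop Filter.atTop :=
    hfun_tendsto_atTop ν τ hτ
  have hbot : Filter.Tendsto (hfun ν τ) Filter.atBot Filter.atBot := by
    have h1 : Filter.Tendsto (fun t : ℝ => hfun (-ν) τ (-t)) Filter.atBot Filter.atTop :=
      (hfun_tendsto_atTop (-ν) τ hτ).comp Filter.tendsto_neg_atBot_atTop
    have h2 : Filter.Tendsto (fun t : ℝ => -(hfun (-ν) τ (-t))) Filter.atBot Filter.atBot :=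
      Filter.tendsto_neg_atTop_atBot.comp h1
    convert h2 using 1
    funext t
    rw [show t = -(-t) by ring, hfun_neg ν τ (-t)]
    simp
  have hhdiff : Differentiable ℝ (hfun ν τ) := fun t => (hasDerivAt_h ν τ t).differentiableAt
  have hcont : Continuous (hfun ν τ) := hhdiff.continuous
  obtain ⟨a, ha⟩ := (hbot.eventually (Filter.eventually_lt_atBot 0)).exists
  obtain ⟨b, hb⟩ := (htop.eventually (Filter.eventually_gt_atTop 0)).exists
  have hab : a ≤ b := by
    by_contra hc
    push_neg at hc
    have := hmono hc
    linarith
  obtain ⟨tstar, _, hts⟩ := intermediate_value_Icc hab hcont.continuousOn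
    (Set.mem_Icc.2 ⟨ha.le, hb.le⟩)
  have hneg : ∀ t, t < tstar → hfun ν τ t < 0 := fun t ht => hts ▸ hmono ht
  have hpos : ∀ t, tstar < t → 0 < hfun ν τ t := fun t ht => hts ▸ hmono ht
  have hRpp_neg : ∀ t : ℝ, t < tstar → deriv (deriv (Rfun ν τ)) t < 0 := by
    intro t ht
    rw [deriv2_R]
    have h1 : 0 < τ / (Real.sqrt (1 + t^2))^3 := by positivity
    exact mul_neg_of_pos_of_neg h1 (hneg t ht)
  have hRpp_pos : ∀ t : ℝ, tstar < t → 0 < deriv (deriv (Rfun ν τ)) t := by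
    intro t ht
    rw [deriv2_R]
    have h1 : 0 < τ / (Real.sqrt (1 + t^2))^3 := by positivity
    exact mul_pos h1 (hpos t ht)
  have hRdiff : Differentiable ℝ (Rfun ν τ) := fun t => (hasDerivAt_R ν τ t).differentiableAt
  have hdR : deriv (Rfun ν τ) = Rp ν τ := funext fun x => (hasDerivAt_R ν τ x).deriv
  have hRpdiff : Differentiable ℝ (deriv (Rfun ν τ)) := by
    rw [hdR]; exact fun t => (hasDerivAt_Rp ν τ t).differentiableAt
  refine ⟨hmono, hbot, htop, tstar, hts, fun t h0 => hmono.injective (h0.trans hts.symm),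
    hRpp_neg, hRpp_pos, ?_, ?_⟩
  · apply concaveOn_of_deriv2_nonpos (convex_Iic tstar) hRdiff.continuous.continuousOn
      hRdiff.differentiableOn hRpdiff.differentiableOn
    intro x hx
    rw [interior_Iic] at hx
    have := hRpp_neg x hx
    simpa [Function.iterate_succ, Function.comp] using this.le
  · apply convexOn_of_deriv2_nonneg (convex_Ici tstar) hRdiff.continuous.continuousOn
      hRdiff.differentiableOn hRpdiff.differentiableOn
    intro x hx
    rw [interior_Ici] at hx
    have := hRpp_pos x hx
    simpa [Function.iterate_succ, Function.comp] using this.le
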